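/- For all n ≥ 0, a_{n+2} = Q_n, where Q_n is the number of (n+3)-color binary partitions of n into distinct parts; concretely, Q_n is the number of finite sets S of pairs (i, c) of nonnegative integers satisfying c ≤ i + 2 (a part 2^i may carry any of i+3 colors) such that Σ_{(i,c) ∈ S} 2^i = n. -/

import Mathlib

open Finset

section helpers

/-- coefficient of `q^s` in `1/((1-q)^(K+1) (1-q^2))` -/
def Lf (K s : ℕ) : ℕ := ∑ j ∈ range (s/2+1), (s - 2*j + K).choose K

/-- coefficient of `q^s` in `(1+q)^(K+1)/(1-q^2)^(K+2)` -/
def Rf (K s : ℕ) : ℕ := ∑ j ∈ range (s/2+1), (K+1).choose (s-2*j) * (j+K+1).choose (K+1)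

/-- triangle swap -/
lemma swapB (M : ℕ) (G : ℕ → ℕ → ℕ) :
    ∑ j ∈ range (M+1), ∑ i ∈ range (j+1), G j i
      = ∑ i ∈ range (M+1), ∑ d ∈ range (M-i+1), G (i+d) i := by
  rw [Finset.sum_sigma', Finset.sum_sigma']
  refine Finset.sum_nbij' (fun p => ⟨p.2, p.1 - p.2⟩) (fun p => ⟨p.1 + p.2, p.1⟩) ?_ ?_ ?_ ?_ ?_
  · rintro ⟨j, i⟩ h
    simp only [mem_sigma, mem_range] at h
    simp only [mem_sigma, mem_range]
    omega
  · rintro ⟨i, d⟩ h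
    simp only [mem_sigma, mem_range] at h
    simp only [mem_sigma, mem_range]
    omega
  · rintro ⟨j, i⟩ h
    simp only [mem_sigma, mem_range] at h
    ext : 1 <;> simp <;> omega
  · rintro ⟨i, d⟩ h
    simp only [mem_sigma, mem_range] at h
    ext : 1 <;> simp <;> omega
  · rintro ⟨j, i⟩ h
    simp only [mem_sigma, mem_range] at h
    have : i + (j - i) = j := by omega
    simp only []
    rw [this]

/-- "parity" swap -/
lemma swapA (N : ℕ) (F : ℕ → ℕ → ℕ) :
    ∑ u ∈ range (N+1), ∑ i ∈ range (u/2+1), F u i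
      = ∑ i ∈ range (N/2+1), ∑ d ∈ range (N-2*i+1), F (2*i+d) i := by
  rw [Finset.sum_sigma', Finset.sum_sigma']
  refine Finset.sum_nbij' (fun p => ⟨p.2, p.1 - 2*p.2⟩) (fun p => ⟨2*p.1 + p.2, p.1⟩) ?_ ?_ ?_ ?_ ?_
  · rintro ⟨u, i⟩ h
    simp only [mem_sigma, mem_range] at h
    simp only [mem_sigma, mem_range]
    omega
  · rintro ⟨i, d⟩ h
    simp only [mem_sigma, mem_range] at h
    simp only [mem_sigma, mem_range]
    omega
  · rintro ⟨u, i⟩ h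
    simp only [mem_sigma, mem_range] at h
    ext : 1 <;> simp <;> omega
  · rintro ⟨i, d⟩ h
    simp only [mem_sigma, mem_range] at h
    ext : 1 <;> simp <;> omega
  · rintro ⟨u, i⟩ h
    simp only [mem_sigma, mem_range] at h
    have : 2*i + (u - 2*i) = u := by omega
    simp only []
    rw [this]

/-- partial row sums of Pascal's triangle with parity:
`∑_{d ≤ w/2} C(k+1, w-2d) = ∑_{v ≤ w} C(k, v)` -/
lemma Esum (k : ℕ) : ∀ w : ℕ, ∑ d ∈ range (w/2+1), (k+1).choose (w - 2*d)
    = ∑ v ∈ range (w+1), k.choose v := by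
  intro w
  induction w using Nat.strong_induction_on with
  | _ w ih =>
    match w with
    | 0 => simp
    | 1 =>
      simp only [show (1:ℕ)/2 + 1 = 1 by norm_num, Finset.sum_range_one,
        Finset.sum_range_succ, Finset.sum_range_one]
      simp [Nat.choose]
      omega
    | (w+2) =>
      have h1 : (w+2)/2 + 1 = (w/2 + 1) + 1 := by omega
      rw [h1, Finset.sum_range_succ']
      have h2 : ∀ d ∈ range (w/2+1), (k+1).choose (w + 2 - 2*(d+1)) = (k+1).choose (w - 2*d) := by
        intro d _; congr 1; omega
      rw [Finset.sum_congr rfl h2, ih w (by omega)]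
      rw [show w+2+1 = (w+1)+1+1 by ring, Finset.sum_range_succ, Finset.sum_range_succ,
        Finset.sum_range_succ]
      have h3 : w + 2 - 2*0 = w + 2 := by omega
      rw [h3, Nat.choose_succ_succ' k (w+1)]
      have h4 : ∑ v ∈ range (w+1), k.choose v = ∑ x ∈ range w, k.choose x + k.choose w := by
        rw [Finset.sum_range_succ]
      rw [h4]
      ring

/-- hockey-stick in a convenient normal form -/
lemma hockey' (m K : ℕ) :
    ∑ i ∈ range (m+1), (i+K+1).choose (K+1) = (m+K+2).choose (K+2) := by
  have h := Nat.sum_range_add_choose m (K+1)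
  have e1 : ∀ i ∈ range (m+1), (i+K+1).choose (K+1) = (i+(K+1)).choose (K+1) := by
    intro i _; congr 1
  rw [Finset.sum_congr rfl e1, h]
  congr 1 <;> omega

/-- base case `K = 0` of `Lf = Rf`. -/
lemma LfRf_zero (s : ℕ) : Lf 0 s = Rf 0 s := by
  unfold Lf Rf
  rw [Finset.sum_congr rfl (fun j _ => by rw [Nat.choose_zero_right]),
    Finset.sum_const, smul_eq_mul, mul_one]
  rw [Finset.sum_eq_single (s/2)]
  · have h1 : s - 2*(s/2) = 0 ∨ s - 2*(s/2) = 1 := by omega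
    have h2 : Nat.choose 1 (s - 2*(s/2)) = 1 := by rcases h1 with h | h <;> rw [h] <;> rfl
    rw [h2, one_mul, Nat.choose_one_right, Finset.card_range]
  · intro j hj hne
    have hj' : j < s/2 := by simp only [mem_range] at hj; omega
    have : 1 < s - 2*j := by omega
    rw [Nat.choose_eq_zero_of_lt this, zero_mul]
  · intro h
    exact absurd (self_mem_range_succ (s/2)) h

/-- step for `Lf` : multiplying by `1/(1-q)`. -/
lemma Lf_step (K s : ℕ) : Lf (K+1) s = ∑ u ∈ range (s+1), Lf K u := by
  unfold Lf
  rw [swapA s (fun u j => (u - 2*j + K).choose K)]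
  have h0 : ∀ j ∈ range (s/2+1), (s - 2*j + (K+1)).choose (K+1)
      = ∑ d ∈ range (s - 2*j + 1), (d + K).choose K := by
    intro j _
    rw [Nat.sum_range_add_choose (s - 2*j) K]
    congr 1 <;> omega
  rw [Finset.sum_congr rfl h0]
  refine Finset.sum_congr rfl fun j hj => Finset.sum_congr rfl fun d hd => ?_
  congr 1
  omega

/-- step for `Rf` : multiplying by `1/(1-q)`. -/
lemma Rf_step (K s : ℕ) : Rf (K+1) s = ∑ u ∈ range (s+1), Rf K u := by
  unfold Rf
  rw [swapA s (fun u j => (K+1).choose (u-2*j) * (j+K+1).choose (K+1))]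
  have h1 : ∀ j ∈ range (s/2+1), (K+1+1).choose (s-2*j) * (j+(K+1)+1).choose (K+1+1)
      = ∑ i ∈ range (j+1), (K+2).choose (s-2*j) * (i+K+1).choose (K+1) := by
    intro j _
    rw [← Finset.mul_sum, hockey' j K]
    have e1 : K+1+1 = K+2 := by omega
    have e2 : j+(K+1)+1 = j+K+2 := by omega
    rw [e1, e2]
  rw [Finset.sum_congr rfl h1,
    swapB (s/2) (fun j i => (K+2).choose (s-2*j) * (i+K+1).choose (K+1))]
  refine Finset.sum_congr rfl fun j hj => ?_
  simp only [mem_range] at hj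
  have h3 : ∀ d ∈ range (s-2*j+1),
      (K+1).choose (2*j+d-2*j) * (j+K+1).choose (K+1)
        = (K+1).choose d * (j+K+1).choose (K+1) := by
    intro d _; congr 2; omega
  rw [Finset.sum_congr rfl h3, ← Finset.sum_mul, ← Finset.sum_mul]
  congr 1
  have e1 : s/2 - j = (s - 2*j)/2 := by omega
  have e2 : ∀ d ∈ range ((s-2*j)/2+1), (K+2).choose (s - 2*(j+d))
      = (K+1+1).choose ((s-2*j) - 2*d) := by
    intro d hd; congr 1; omega
  rw [e1, Finset.sum_congr rfl e2, Esum (K+1) (s-2*j)]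

/-- The key identity: `1/((1-q)^(K+1)(1-q^2)) = (1+q)^(K+1)/(1-q^2)^(K+2)`. -/
lemma LfRf (K : ℕ) : ∀ s : ℕ, Lf K s = Rf K s := by
  induction K with
  | zero => exact LfRf_zero
  | succ K ih =>
    intro s
    rw [Lf_step, Rf_step]
    exact Finset.sum_congr rfl fun u _ => ih u

end helpers

section funcs
/-- number of binary partitions of `n` -/
def b : ℕ → ℕ
  | 0 => 1
  | (n+1) => ∑ j ∈ (range ((n+1)/2 + 1)).attach, b j.1
  decreasing_by
    have := mem_range.mp j.2
    omega

/-- number of `(i+k)`-colored binary partitions of `n` into distinct colored parts,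
where the part `2^i` comes in `i + k` colors. -/
def q : ℕ → ℕ → ℕ
  | 0, _ => 1
  | (n+1), k => ∑ j ∈ (range ((n+1)/2 + 1)).attach, k.choose (n+1-2*j.1) * q j.1 (k+1)
  decreasing_by
    have := mem_range.mp j.2
    omega

lemma b_rec (n : ℕ) : b n = ∑ j ∈ range (n/2 + 1), b j := by
  match n with
  | 0 => simp [b]
  | (n+1) =>
    rw [b]
    rw [← Finset.sum_attach (range ((n+1)/2+1)) (fun j => b j)]

lemma q_rec (n k : ℕ) (hn : 1 ≤ n) :
    q n k = ∑ j ∈ range (n/2 + 1), k.choose (n-2*j) * q j (k+1) := by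
  match n with
  | (n+1) =>
    rw [q]
    rw [← Finset.sum_attach (range ((n+1)/2+1)) (fun j => k.choose (n+1-2*j) * q j (k+1))]

/-- weighted count of binary partitions: `∑_μ C(m₁(μ)+K, K)`. -/
def f (K n : ℕ) : ℕ := ∑ j ∈ range (n/2+1), (n - 2*j + K).choose K * b j

theorem f_eq_q (n : ℕ) : ∀ K : ℕ, f K n = q n (K+1) := by
  induction n using Nat.strong_induction_on with
  | _ n ih =>
    intro K
    match n with
    | 0 => simp [f, b, q]
    | (n+1) =>
      rw [q_rec _ _ (by omega)]
      have ih2 : ∀ j ∈ range ((n+1)/2+1), (K+1).choose (n+1-2*j) * q j (K+2)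
          = (K+1).choose (n+1-2*j) * f (K+1) j := by
        intro j hj
        have hj' : j < n+1 := by have := mem_range.mp hj; omega
        rw [ih j hj' (K+1)]
      rw [Finset.sum_congr rfl ih2]
      -- RHS: expand f (K+1) j and push the factor inside, then swap
      have hR : ∀ j ∈ range ((n+1)/2+1), (K+1).choose (n+1-2*j) * f (K+1) j
          = ∑ i ∈ range (j/2+1), (K+1).choose (n+1-2*j) * ((j - 2*i + (K+1)).choose (K+1) * b i) := by
        intro j _
        rw [f, Finset.mul_sum]
      rw [Finset.sum_congr rfl hR,
        swapA ((n+1)/2) (fun j i => (K+1).choose (n+1-2*j) * ((j - 2*i + (K+1)).choose (K+1) * b i))]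
      -- LHS: expand b j and swap
      have hL0 : f K (n+1) = ∑ j ∈ range ((n+1)/2+1), ∑ i ∈ range (j/2+1), (n+1-2*j+K).choose K * b i := by
        rw [f]
        refine Finset.sum_congr rfl fun j hj => ?_
        rw [b_rec j, Finset.mul_sum]
      rw [hL0, swapA ((n+1)/2) (fun j i => (n+1-2*j+K).choose K * b i)]
      refine Finset.sum_congr rfl fun i hi => ?_
      have hi' : i ≤ (n+1)/2/2 := by have := mem_range.mp hi; omega
      have key := LfRf K (n+1-4*i)
      rw [Lf, Rf] at key
      have e0 : (n+1)/2 - 2*i = (n+1-4*i)/2 := by omega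
      have hassoc : ∀ d ∈ range ((n+1)/2 - 2*i + 1),
          (K+1).choose (n+1-2*(2*i+d)) * ((2*i+d - 2*i + (K+1)).choose (K+1) * b i)
            = ((K+1).choose (n+1-2*(2*i+d)) * ((2*i+d) - 2*i + (K+1)).choose (K+1)) * b i := by
        intro d _; ring
      rw [Finset.sum_congr rfl hassoc, ← Finset.sum_mul, ← Finset.sum_mul]
      congr 1
      rw [e0]
      calc ∑ d ∈ range ((n+1-4*i)/2+1), (n+1-2*(2*i+d)+K).choose K
          = ∑ d ∈ range ((n+1-4*i)/2+1), ((n+1-4*i) - 2*d + K).choose K := by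
            refine Finset.sum_congr rfl fun d hd => ?_
            congr 1
            omega
        _ = ∑ d ∈ range ((n+1-4*i)/2+1), (K+1).choose ((n+1-4*i)-2*d) * (d+K+1).choose (K+1) := key
        _ = ∑ d ∈ range ((n+1-4*i)/2+1), (K+1).choose (n+1-2*(2*i+d)) * ((2*i+d) - 2*i + (K+1)).choose (K+1) := by
            refine Finset.sum_congr rfl fun d hd => ?_
            congr 2 <;> omega

end funcs


/-- `pre2 s` is the multiset of all pairwise products of two distinct entries
(by position) of the multiset `s`, i.e. the summands of `e₂` evaluated at `s`. -/
def pre2 (s : Multiset ℕ) : Multiset ℕ := (Multiset.powersetCard 2 s).map Multiset.prod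

open Classical in
/-- The finset of binary partitions of `n`: partitions all of whose parts are powers of 2. -/
noncomputable def binaryPartitions (n : ℕ) : Finset (Nat.Partition n) :=
  Finset.univ.filter fun l => ∀ p ∈ l.parts, ∃ i : ℕ, p = 2 ^ i

/-- `a n = m₁(ImB₂(n))`: the total number of parts equal to 1 in the image of `pre2`
on binary partitions of `n` with at least two parts; by injectivity this equals
`∑_{λ ∈ B(n)} C(m₁(λ), 2)`. -/
noncomputable def a (n : ℕ) : ℕ :=
  ∑ l ∈ binaryPartitions n, Nat.choose (l.parts.count 1) 2


section parts
lemma mem_binaryPartitions {n : ℕ} (l : Nat.Partition n) :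
    l ∈ binaryPartitions n ↔ ∀ p ∈ l.parts, ∃ i : ℕ, p = 2 ^ i := by
  simp [binaryPartitions]

/-- halve all the parts bigger than 1 (and drop the 1s) -/
def halveParts (s : Multiset ℕ) : Multiset ℕ := (s.filter (fun p => ¬ p = 1)).map (· / 2)

lemma sigma_part_ext {j j' : ℕ} (p : Nat.Partition j) (p' : Nat.Partition j')
    (h : p.parts = p'.parts) : (⟨j, p⟩ : Σ n, Nat.Partition n) = ⟨j', p'⟩ := by
  have hj : j = j' := by rw [← p.parts_sum, ← p'.parts_sum, h]
  subst hj
  exact congrArg (Sigma.mk j) (Nat.Partition.ext h)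

/-- the "strip the ones and halve" map on binary partitions -/
noncomputable def halveP (N : ℕ) (l : Nat.Partition N) : Σ j, Nat.Partition j :=
  ⟨(halveParts l.parts).sum,
    { parts := halveParts l.parts
      parts_pos := by
        intro i hi
        simp only [halveParts, Multiset.mem_map, Multiset.mem_filter] at hi
        obtain ⟨x, ⟨hx, hx1⟩, rfl⟩ := hi
        have := l.parts_pos hx
        omega
      parts_sum := rfl }⟩

/-- the inverse: multiply the parts by two and append ones. -/
def unhalveP (N j : ℕ) (μ : Nat.Partition j) (h : 2*j ≤ N) : Nat.Partition N where
  parts := Multiset.replicate (N - 2*j) 1 + μ.parts.map (2 * ·)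
  parts_pos := by
    intro i hi
    simp only [Multiset.mem_add, Multiset.mem_replicate, Multiset.mem_map] at hi
    rcases hi with ⟨-, rfl⟩ | ⟨x, hx, rfl⟩
    · norm_num
    · have := μ.parts_pos hx; omega
  parts_sum := by
    rw [Multiset.sum_add, Multiset.sum_replicate, smul_eq_mul, mul_one]
    have h2 : (μ.parts.map (2 * ·)).sum = 2 * j := by
      rw [Multiset.sum_map_mul_left]
      simp [μ.parts_sum, Multiset.map_id']
    rw [h2]
    omega

section facts
variable {N : ℕ} (l : Nat.Partition N) (hbin : ∀ p ∈ l.parts, ∃ i : ℕ, p = 2 ^ i)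

lemma parts_even (hbin : ∀ p ∈ l.parts, ∃ i : ℕ, p = 2 ^ i) :
    ∀ x ∈ l.parts.filter (fun p => ¬ p = 1), 2 ∣ x := by
  intro x hx
  rw [Multiset.mem_filter] at hx
  obtain ⟨i, rfl⟩ := hbin x hx.1
  match i with
  | 0 => exact absurd rfl hx.2
  | (i+1) => exact ⟨2^i, by ring⟩

lemma count_le (hbin : True) : l.parts.count 1 ≤ N := by
  have h1 : (l.parts.filter (fun p => p = 1)).sum = l.parts.count 1 := by
    rw [Multiset.filter_eq', Multiset.sum_replicate, smul_eq_mul, mul_one]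
  obtain ⟨u, hu⟩ := Multiset.le_iff_exists_add.mp
    (Multiset.filter_le (fun p => p = 1) l.parts)
  have h2 := congrArg Multiset.sum hu
  rw [Multiset.sum_add, l.parts_sum] at h2
  omega

lemma sum_filter_ne_one : (l.parts.filter (fun p => ¬ p = 1)).sum = N - l.parts.count 1 := by
  have h0 := Multiset.filter_add_not (fun p => p = 1) l.parts
  have h1 : (l.parts.filter (fun p => p = 1)).sum = l.parts.count 1 := by
    rw [Multiset.filter_eq', Multiset.sum_replicate, smul_eq_mul, mul_one]
  have h2 := congrArg Multiset.sum h0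
  rw [Multiset.sum_add, h1, l.parts_sum] at h2
  omega

lemma dvd_sub_count (hbin : ∀ p ∈ l.parts, ∃ i : ℕ, p = 2 ^ i) :
    2 ∣ N - l.parts.count 1 := by
  rw [← sum_filter_ne_one l]
  exact Multiset.dvd_sum (parts_even l hbin)

lemma halveParts_sum (hbin : ∀ p ∈ l.parts, ∃ i : ℕ, p = 2 ^ i) :
    (halveParts l.parts).sum = (N - l.parts.count 1)/2 := by
  have hev := parts_even l hbin
  have key : 2 * (halveParts l.parts).sum = N - l.parts.count 1 := by
    rw [halveParts, ← Multiset.sum_map_mul_left]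
    have : ((l.parts.filter (fun p => ¬ p = 1)).map (fun x => 2 * (x / 2))) =
        ((l.parts.filter (fun p => ¬ p = 1)).map (fun x => x)) := by
      apply Multiset.map_congr rfl
      intro x hx
      have := hev x hx
      omega
    rw [this, Multiset.map_id', sum_filter_ne_one l]
  omega
end facts

lemma N_sub_eq {N : ℕ} (l : Nat.Partition N) (hbin : ∀ p ∈ l.parts, ∃ i : ℕ, p = 2 ^ i) :
    N - 2 * ((N - l.parts.count 1)/2) = l.parts.count 1 := by
  have h1 := count_le l trivial
  have h2 := dvd_sub_count l hbin
  omega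

lemma bp_sum (N : ℕ) (g : ℕ → ℕ) :
    ∑ l ∈ binaryPartitions N, g (l.parts.count 1)
      = ∑ j ∈ range (N/2+1), g (N - 2*j) * (binaryPartitions j).card := by
  have hRHS : ∑ j ∈ range (N/2+1), g (N - 2*j) * (binaryPartitions j).card
      = ∑ p ∈ (range (N/2+1)).sigma (fun j => binaryPartitions j), g (N - 2*p.1) := by
    rw [Finset.sum_sigma]
    refine Finset.sum_congr rfl fun j hj => ?_
    simp [mul_comm]
  rw [hRHS]
  refine Finset.sum_bij' (fun l _ => halveP N l)
    (fun p hp => unhalveP N p.1 p.2 (by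
      have := (Finset.mem_sigma.mp hp).1
      rw [Finset.mem_range] at this
      omega)) ?_ ?_ ?_ ?_ ?_
  · -- forward membership
    intro l hl
    rw [mem_binaryPartitions] at hl
    rw [Finset.mem_sigma]
    constructor
    · rw [Finset.mem_range]
      have : (halveP N l).1 = (N - l.parts.count 1)/2 := halveParts_sum l hl
      rw [this]
      omega
    · rw [mem_binaryPartitions]
      intro p hp
      simp only [halveP, halveParts, Multiset.mem_map, Multiset.mem_filter] at hp
      obtain ⟨x, ⟨hx, hx1⟩, rfl⟩ := hp
      obtain ⟨i, rfl⟩ := hl x hx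
      match i with
      | 0 => exact absurd rfl hx1
      | (i+1) => exact ⟨i, by rw [pow_succ]; omega⟩
  · -- backward membership
    intro p hp
    rw [Finset.mem_sigma] at hp
    have hp2 := hp.2
    rw [mem_binaryPartitions] at hp2 ⊢
    intro x hx
    simp only [unhalveP, Multiset.mem_add, Multiset.mem_replicate, Multiset.mem_map] at hx
    rcases hx with ⟨-, rfl⟩ | ⟨y, hy, rfl⟩
    · exact ⟨0, rfl⟩
    · obtain ⟨i, rfl⟩ := hp2 y hy
      exact ⟨i+1, by rw [pow_succ]; ring⟩
  · -- left inverse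
    intro l hl
    rw [mem_binaryPartitions] at hl
    apply Nat.Partition.ext
    show Multiset.replicate (N - 2*(halveP N l).1) 1 + (halveP N l).2.parts.map (2 * ·) = l.parts
    have h1 : (halveP N l).1 = (N - l.parts.count 1)/2 := halveParts_sum l hl
    have h2 : (halveP N l).2.parts = halveParts l.parts := rfl
    rw [h2, h1, N_sub_eq l hl]
    have h3 : (halveParts l.parts).map (2 * ·) = l.parts.filter (fun p => ¬ p = 1) := by
      rw [halveParts, Multiset.map_map]
      have : ∀ x ∈ l.parts.filter (fun p => ¬ p = 1), ((2 * ·) ∘ (· / 2)) x = (fun y => y) x := by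
        intro x hx
        have := parts_even l hl x hx
        simp only [Function.comp_apply]
        omega
      rw [Multiset.map_congr rfl this, Multiset.map_id']
    rw [h3]
    have h4 : Multiset.replicate (l.parts.count 1) 1 = l.parts.filter (fun p => p = 1) :=
      (Multiset.filter_eq' l.parts 1).symm
    rw [h4, Multiset.filter_add_not]
  · -- right inverse
    intro p hp
    rw [Finset.mem_sigma] at hp
    refine sigma_part_ext _ _ ?_
    show halveParts (Multiset.replicate (N - 2*p.1) 1 + p.2.parts.map (2 * ·)) = p.2.parts
    rw [halveParts, Multiset.filter_add]
    have h1 : (Multiset.replicate (N - 2*p.1) 1).filter (fun p => ¬ p = 1) = 0 := by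
      rw [Multiset.filter_eq_nil]
      intro a ha
      rw [Multiset.eq_of_mem_replicate ha]
      simp
    have h2 : (p.2.parts.map (2 * ·)).filter (fun p => ¬ p = 1) = p.2.parts.map (2 * ·) := by
      rw [Multiset.filter_eq_self]
      intro a ha
      obtain ⟨y, hy, rfl⟩ := Multiset.mem_map.mp ha
      have := p.2.parts_pos hy
      omega
    rw [h1, h2, zero_add, Multiset.map_map]
    have : ∀ x ∈ p.2.parts, ((· / 2) ∘ (2 * ·)) x = (fun y => y) x := by
      intro x hx
      simp only [Function.comp_apply]
      omega
    rw [Multiset.map_congr rfl this, Multiset.map_id']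
  · -- values
    intro l hl
    rw [mem_binaryPartitions] at hl
    congr 1
    have h1 : (halveP N l).1 = (N - l.parts.count 1)/2 := halveParts_sum l hl
    rw [h1, N_sub_eq l hl]

lemma card_bp (n : ℕ) : (binaryPartitions n).card = b n := by
  induction n using Nat.strong_induction_on with
  | _ n ih =>
    match n with
    | 0 =>
      have he : binaryPartitions 0 = Finset.univ := by
        apply Finset.eq_univ_of_forall
        intro l
        rw [mem_binaryPartitions]
        intro p hp
        have h0 : l.parts = 0 := by
          by_contra hne
          obtain ⟨x, hx⟩ := Multiset.exists_mem_of_ne_zero hne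
          have hpos := l.parts_pos hx
          have hsum := l.parts_sum
          have hle := Multiset.single_le_sum (fun y _ => Nat.zero_le y) x hx
          omega
        rw [h0] at hp
        exact absurd hp (Multiset.notMem_zero p)
      rw [he, Finset.card_univ, b]
      exact Fintype.card_unique
    | (n+1) =>
      rw [Finset.card_eq_sum_ones, bp_sum (n+1) (fun _ => 1), b_rec]
      refine Finset.sum_congr rfl fun j hj => ?_
      rw [one_mul, ih j (by have := Finset.mem_range.mp hj; omega)]
end parts

section aside
lemma a_eq_f (n : ℕ) : a (n+2) = f 2 n := by
  rw [a, bp_sum (n+2) (fun m => m.choose 2), f]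
  have hr : (n+2)/2 + 1 = (n/2 + 1) + 1 := by omega
  rw [hr, Finset.sum_range_succ]
  have hlast : (n + 2 - 2*(n/2+1)).choose 2 = 0 := by
    have : n + 2 - 2*(n/2+1) = 0 ∨ n + 2 - 2*(n/2+1) = 1 := by omega
    rcases this with h | h <;> rw [h] <;> rfl
  rw [hlast, zero_mul, add_zero]
  refine Finset.sum_congr rfl fun j hj => ?_
  have hj' := Finset.mem_range.mp hj
  rw [card_bp]
  congr 2
  omega
end aside
section colored

lemma q_zero (k : ℕ) : q 0 k = 1 := by rw [q]

open Classical in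
noncomputable def QF (k n : ℕ) : Finset (Finset (ℕ × ℕ)) :=
  ((range (n+1) ×ˢ range (n+k)).powerset).filter
    (fun S => (∀ p ∈ S, p.2 < p.1 + k) ∧ ∑ p ∈ S, 2^p.1 = n)

lemma mem_QF {k n : ℕ} (S : Finset (ℕ × ℕ)) :
    S ∈ QF k n ↔ (∀ p ∈ S, p.2 < p.1 + k) ∧ ∑ p ∈ S, 2^p.1 = n := by
  rw [QF, Finset.mem_filter, Finset.mem_powerset]
  constructor
  · rintro ⟨-, h⟩; exact h
  · rintro ⟨h1, h2⟩
    refine ⟨?_, h1, h2⟩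
    intro p hp
    have hle : 2^p.1 ≤ n := by
      rw [← h2]
      exact Finset.single_le_sum (f := fun r : ℕ×ℕ => 2^r.1) (fun r _ => Nat.zero_le _) hp
    have h3 : p.1 < 2^p.1 := Nat.lt_two_pow_self
    have h4 := h1 p hp
    rw [Finset.mem_product, Finset.mem_range, Finset.mem_range]
    omega

def colorsOf (S : Finset (ℕ×ℕ)) : Finset ℕ := (S.filter (fun p => p.1 = 0)).image Prod.snd
def shiftDown (S : Finset (ℕ×ℕ)) : Finset (ℕ×ℕ) :=
  (S.filter (fun p => ¬ p.1 = 0)).image (fun p => (p.1 - 1, p.2))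
def unshift (T : Finset ℕ) (S' : Finset (ℕ×ℕ)) : Finset (ℕ×ℕ) :=
  T.image (fun c => (0, c)) ∪ S'.image (fun p => (p.1 + 1, p.2))

lemma colorsOf_card (S : Finset (ℕ×ℕ)) :
    (colorsOf S).card = (S.filter (fun p => p.1 = 0)).card := by
  rw [colorsOf]
  apply Finset.card_image_of_injOn
  intro p hp p' hp' h
  rw [Finset.mem_coe, Finset.mem_filter] at hp hp'
  exact Prod.ext (hp.2.trans hp'.2.symm) h

lemma sum_split (S : Finset (ℕ×ℕ)) :
    ∑ p ∈ S, 2^p.1 = (colorsOf S).card + ∑ p ∈ S.filter (fun p => ¬ p.1 = 0), 2^p.1 := by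
  have h0 : ∑ p ∈ S.filter (fun p => p.1 = 0), 2^p.1
      = ∑ _p ∈ S.filter (fun p => p.1 = 0), 1 := by
    refine Finset.sum_congr rfl fun p hp => ?_
    rw [(Finset.mem_filter.mp hp).2, pow_zero]
  rw [colorsOf_card,
    ← Finset.sum_filter_add_sum_filter_not S (fun p => p.1 = 0) (fun p => 2^p.1),
    h0, Finset.sum_const, smul_eq_mul, mul_one]

lemma shiftDown_sum (S : Finset (ℕ×ℕ)) :
    2 * ∑ p ∈ shiftDown S, 2^p.1 = ∑ p ∈ S.filter (fun p => ¬ p.1 = 0), 2^p.1 := by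
  rw [shiftDown, Finset.sum_image (by
    intro p hp p' hp' h
    rw [Finset.mem_coe, Finset.mem_filter] at hp hp'
    rw [Prod.ext_iff] at h ⊢
    simp only at h ⊢
    omega)]
  rw [Finset.mul_sum]
  refine Finset.sum_congr rfl fun p hp => ?_
  rw [Finset.mem_filter] at hp
  rw [← pow_succ']
  congr 1
  omega

lemma mem_colorsOf {S : Finset (ℕ×ℕ)} {c : ℕ} : c ∈ colorsOf S ↔ (0, c) ∈ S := by
  simp only [colorsOf, Finset.mem_image, Finset.mem_filter]
  constructor
  · rintro ⟨⟨x, y⟩, ⟨hp, hp0⟩, rfl⟩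
    simp only at hp0
    subst hp0
    exact hp
  · intro h
    exact ⟨(0, c), ⟨h, rfl⟩, rfl⟩

lemma mem_shiftDown {S : Finset (ℕ×ℕ)} {r : ℕ×ℕ} :
    r ∈ shiftDown S ↔ (r.1 + 1, r.2) ∈ S := by
  obtain ⟨a, b⟩ := r
  simp only [shiftDown, Finset.mem_image, Finset.mem_filter]
  constructor
  · rintro ⟨⟨x, y⟩, ⟨hp, hp0⟩, heq⟩
    simp only [Prod.mk.injEq, and_true] at heq hp0
    have : ((a : ℕ) + 1, (b : ℕ)) = (x, y) := by
      simp only [Prod.mk.injEq, and_true]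
      omega
    rw [this]
    exact hp
  · intro h
    exact ⟨(a+1, b), ⟨h, by simp⟩, by simp⟩

lemma mem_unshift {T : Finset ℕ} {S' : Finset (ℕ×ℕ)} {p : ℕ×ℕ} :
    p ∈ unshift T S' ↔ (p.1 = 0 ∧ p.2 ∈ T) ∨ (p.1 ≠ 0 ∧ (p.1 - 1, p.2) ∈ S') := by
  simp only [unshift, Finset.mem_union, Finset.mem_image]
  constructor
  · rintro (⟨c, hc, rfl⟩ | ⟨⟨x, y⟩, hr, rfl⟩)
    · exact Or.inl ⟨rfl, hc⟩
    · exact Or.inr ⟨by simp, by simpa using hr⟩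
  · obtain ⟨a, b⟩ := p
    rintro (⟨h0, hmem⟩ | ⟨h0, hmem⟩)
    · simp only at h0 hmem
      subst h0
      exact Or.inl ⟨b, hmem, rfl⟩
    · simp only at h0 hmem
      refine Or.inr ⟨(a - 1, b), hmem, ?_⟩
      simp only [Prod.mk.injEq, and_true]
      omega

lemma parity_sum (S : Finset (ℕ×ℕ)) :
    2 ∣ ∑ p ∈ S.filter (fun p => ¬ p.1 = 0), 2^p.1 := by
  apply Finset.dvd_sum
  intro p hp
  have := (Finset.mem_filter.mp hp).2
  exact dvd_pow_self 2 this

lemma QF_zero (k : ℕ) : QF k 0 = {∅} := by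
  ext S
  rw [mem_QF, Finset.mem_singleton]
  constructor
  · rintro ⟨-, h2⟩
    apply Finset.eq_empty_of_forall_notMem
    intro p hp
    have h3 := (Finset.sum_eq_zero_iff.mp h2) p hp
    exact absurd h3 (by positivity)
  · rintro rfl
    exact ⟨by simp, by simp⟩

lemma unshift_sum {T : Finset ℕ} {S' : Finset (ℕ×ℕ)} :
    ∑ p ∈ unshift T S', 2^p.1 = T.card + 2 * ∑ p ∈ S', 2^p.1 := by
  rw [unshift, Finset.sum_union (by
    rw [Finset.disjoint_left]
    rintro p hp hq
    obtain ⟨c, hc, rfl⟩ := Finset.mem_image.mp hp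
    obtain ⟨r, hr, hre⟩ := Finset.mem_image.mp hq
    rw [Prod.ext_iff] at hre
    simp only at hre
    omega)]
  have e1 : ∑ p ∈ T.image (fun c => ((0:ℕ), c)), 2^p.1 = T.card := by
    rw [Finset.sum_image (by intro a _ b _ h; exact (Prod.ext_iff.mp h).2)]
    simp
  have e2 : ∑ p ∈ S'.image (fun p => (p.1 + 1, p.2)), 2^p.1
      = 2 * ∑ p ∈ S', 2^p.1 := by
    rw [Finset.sum_image (by
      intro a _ b _ h
      rw [Prod.ext_iff] at h ⊢
      simp only at h ⊢
      omega)]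
    rw [Finset.mul_sum]
    refine Finset.sum_congr rfl fun p hp => ?_
    rw [← pow_succ']
  rw [e1, e2]

lemma QF_card : ∀ n k : ℕ, (QF k n).card = q n k := by
  intro n
  induction n using Nat.strong_induction_on with
  | _ n ih =>
    intro k
    match n with
    | 0 => rw [QF_zero, q_zero, Finset.card_singleton]
    | (n+1) =>
      set X := ((range k).powerset.filter
          (fun T => T.card ≤ n+1 ∧ (n+1 - T.card) % 2 = 0)).sigma
          (fun T => QF (k+1) ((n+1 - T.card)/2)) with hX
      have hbij : (QF k (n+1)).card = X.card := by
        refine Finset.card_bij' (fun S _ => ⟨colorsOf S, shiftDown S⟩)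
          (fun p _ => unshift p.1 p.2) ?_ ?_ ?_ ?_
        · -- forward membership
          intro S hS
          rw [mem_QF] at hS
          obtain ⟨h1, h2⟩ := hS
          have hsplit := sum_split S
          have hpar := parity_sum S
          have hsh := shiftDown_sum S
          show (⟨colorsOf S, shiftDown S⟩ : (_ : Finset ℕ) × Finset (ℕ×ℕ)) ∈ X
          rw [hX, Finset.mem_sigma]
          dsimp only
          have hTcard : (colorsOf S).card ≤ n+1 ∧ (n+1 - (colorsOf S).card) % 2 = 0 := by
            omega
          refine ⟨Finset.mem_filter.mpr ⟨Finset.mem_powerset.mpr ?_, hTcard⟩, ?_⟩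
          · intro c hc
            rw [mem_colorsOf] at hc
            have := h1 _ hc
            rw [Finset.mem_range]
            simp only at this
            omega
          · rw [mem_QF]
            constructor
            · intro p hp
              rw [mem_shiftDown] at hp
              have := h1 _ hp
              simp only at this
              omega
            · omega
        · -- backward membership
          rintro ⟨T, S'⟩ hp
          rw [hX, Finset.mem_sigma] at hp
          dsimp only at hp
          obtain ⟨hT, hS'⟩ := hp
          rw [Finset.mem_filter, Finset.mem_powerset] at hT
          obtain ⟨hTsub, hTcard, hTpar⟩ := hT
          rw [mem_QF] at hS'
          obtain ⟨h1', h2'⟩ := hS'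
          show unshift T S' ∈ QF k (n+1)
          rw [mem_QF]
          constructor
          · intro p hp
            rw [mem_unshift] at hp
            rcases hp with ⟨h0, hmem⟩ | ⟨h0, hmem⟩
            · have := Finset.mem_range.mp (hTsub hmem)
              omega
            · have := h1' _ hmem
              simp only at this
              omega
          · rw [unshift_sum, h2']
            omega
        · -- left inverse
          intro S hS
          rw [mem_QF] at hS
          show unshift (colorsOf S) (shiftDown S) = S
          ext p
          obtain ⟨a, b⟩ := p
          rw [mem_unshift, mem_colorsOf, mem_shiftDown]
          simp only
          constructor
          · rintro (⟨h0, hmem⟩ | ⟨h0, hmem⟩)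
            · subst h0
              exact hmem
            · have : ((a : ℕ) - 1 + 1, (b : ℕ)) = (a, b) := by
                simp only [Prod.mk.injEq, and_true]
                omega
              rwa [this] at hmem
          · intro hp
            by_cases h0 : a = 0
            · subst h0
              exact Or.inl ⟨rfl, hp⟩
            · refine Or.inr ⟨h0, ?_⟩
              have : ((a : ℕ) - 1 + 1, (b : ℕ)) = (a, b) := by
                simp only [Prod.mk.injEq, and_true]
                omega
              rwa [this]
        · -- right inverse
          rintro ⟨T, S'⟩ hp
          rw [hX, Finset.mem_sigma] at hp
          dsimp only at hp
          obtain ⟨hT, hS'⟩ := hp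
          rw [Finset.mem_filter, Finset.mem_powerset] at hT
          rw [mem_QF] at hS'
          have hTeq : colorsOf (unshift T S') = T := by
            ext c
            rw [mem_colorsOf, mem_unshift]
            constructor
            · rintro (⟨-, hmem⟩ | ⟨h0, -⟩)
              · exact hmem
              · exact absurd rfl h0
            · intro hc
              exact Or.inl ⟨rfl, hc⟩
          have hSeq : shiftDown (unshift T S') = S' := by
            ext r
            rw [mem_shiftDown, mem_unshift]
            constructor
            · rintro (⟨h0, -⟩ | ⟨-, hmem⟩)
              · exact absurd h0 (by simp)
              · simpa using hmem
            · intro hr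
              refine Or.inr ⟨by simp, by simpa using hr⟩
          show (⟨colorsOf (unshift T S'), shiftDown (unshift T S')⟩ :
            (_ : Finset ℕ) × Finset (ℕ×ℕ)) = ⟨T, S'⟩
          rw [hTeq, hSeq]
      rw [hbij, hX, Finset.card_sigma]
      have hIH : ∀ T ∈ (range k).powerset.filter
          (fun T => T.card ≤ n+1 ∧ (n+1 - T.card) % 2 = 0),
          (QF (k+1) ((n+1 - T.card)/2)).card = q ((n+1 - T.card)/2) (k+1) := by
        intro T _
        exact ih ((n+1 - T.card)/2) (by omega) (k+1)
      rw [Finset.sum_congr rfl hIH]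
      rw [Finset.sum_filter]
      rw [Finset.powerset_card_disjiUnion]; erw [Finset.sum_disjiUnion]
      have hcards : ∀ t ∈ range ((range k).card + 1),
          ∑ T ∈ Finset.powersetCard t (range k),
            (if T.card ≤ n+1 ∧ (n+1 - T.card) % 2 = 0 then q ((n+1 - T.card)/2) (k+1) else 0)
          = k.choose t * (if t ≤ n+1 ∧ (n+1 - t) % 2 = 0 then q ((n+1 - t)/2) (k+1) else 0) := by
        intro t _
        have h5 : ∀ T ∈ Finset.powersetCard t (range k),
            (if T.card ≤ n+1 ∧ (n+1 - T.card) % 2 = 0 then q ((n+1 - T.card)/2) (k+1) else 0)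
            = (if t ≤ n+1 ∧ (n+1 - t) % 2 = 0 then q ((n+1 - t)/2) (k+1) else 0) := by
          intro T hT
          rw [(Finset.mem_powersetCard.mp hT).2]
        rw [Finset.sum_congr rfl h5, Finset.sum_const, smul_eq_mul,
          Finset.card_powersetCard, Finset.card_range]
      rw [Finset.sum_congr rfl hcards, Finset.card_range]
      rw [q_rec (n+1) k (by omega)]
      rw [← Finset.sum_filter_of_ne (s := range ((n+1)/2+1))
        (p := fun j => n+1-2*j ≤ k)
        (f := fun j => k.choose (n+1-2*j) * q j (k+1))
        (by
          intro j _ hne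
          by_contra hgt
          refine hne ?_
          show k.choose (n+1-2*j) * q j (k+1) = 0
          rw [Nat.choose_eq_zero_of_lt (show k < n+1-2*j by omega), zero_mul])]
      have hpush : ∀ t ∈ range (k+1),
          k.choose t * (if t ≤ n+1 ∧ (n+1 - t) % 2 = 0 then q ((n+1 - t)/2) (k+1) else 0)
          = (if t ≤ n+1 ∧ (n+1 - t) % 2 = 0 then k.choose t * q ((n+1 - t)/2) (k+1) else 0) := by
        intro t _
        split <;> ring
      rw [Finset.sum_congr rfl hpush, ← Finset.sum_filter]
      refine Finset.sum_nbij' (fun t => (n+1-t)/2) (fun j => n+1-2*j) ?_ ?_ ?_ ?_ ?_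
      · intro t ht
        simp only [Finset.mem_filter, Finset.mem_range] at ht ⊢
        omega
      · intro j hj
        simp only [Finset.mem_filter, Finset.mem_range] at hj ⊢
        omega
      · intro t ht
        simp only [Finset.mem_filter, Finset.mem_range] at ht
        show n+1-2*((n+1-t)/2) = t
        omega
      · intro j hj
        simp only [Finset.mem_filter, Finset.mem_range] at hj
        show (n+1-(n+1-2*j))/2 = j
        omega
      · intro t ht
        simp only [Finset.mem_filter, Finset.mem_range] at ht
        show k.choose t * q ((n+1-t)/2) (k+1)
          = k.choose (n+1-2*((n+1-t)/2)) * q ((n+1-t)/2) (k+1)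
        have h6 : n+1-2*((n+1-t)/2) = t := by omega
        rw [h6]


lemma natCard_eq (n : ℕ) :
    Nat.card {S : Finset (ℕ × ℕ) //
      (∀ p ∈ S, p.2 ≤ p.1 + 2) ∧ (∑ p ∈ S, 2 ^ p.1) = n} = (QF 3 n).card := by
  have e : {S : Finset (ℕ × ℕ) // (∀ p ∈ S, p.2 ≤ p.1 + 2) ∧ (∑ p ∈ S, 2 ^ p.1) = n}
      ≃ {S // S ∈ QF 3 n} :=
    Equiv.subtypeEquivRight (fun S => by
      rw [mem_QF]
      constructor
      · rintro ⟨h1, h2⟩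
        exact ⟨fun p hp => by have := h1 p hp; omega, h2⟩
      · rintro ⟨h1, h2⟩
        exact ⟨fun p hp => by have := h1 p hp; omega, h2⟩)
  rw [Nat.card_congr e, Nat.card_eq_finsetCard]

end colored

theorem stmt_18 (n : ℕ) :
    a (n + 2) = Nat.card {S : Finset (ℕ × ℕ) //
      (∀ p ∈ S, p.2 ≤ p.1 + 2) ∧ (∑ p ∈ S, 2 ^ p.1) = n} := by
  rw [a_eq_f n, f_eq_q n 2, natCard_eq n, QF_card n 3]
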